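/- The family λ is natural: for all posets X, Y, every monotone map f : X → Y, and every S ∈ Dn(Up X), one has Up(Dn f)(λ_X(S)) = λ_Y(Dn(Up f)(S)). -/
import Mathlib


/-- The action of the upset functor `Up` on a map: the upward closure of the image. -/
def UpMap {X Y : Type*} [Preorder X] [Preorder Y] (f : X → Y) (S : UpperSet X) :
    UpperSet Y :=
  upperClosure (f '' (S : Set X))

/-- The action of the downset functor `Dn` on a map: the downward closure of the image. -/
def DnMap {X Y : Type*} [Preorder X] [Preorder Y] (f : X → Y) (S : LowerSet X) :
    LowerSet Y :=
  lowerClosure (f '' (S : Set X))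

/-- The unit of the upset monad: `x ↦ ↑{x}`. -/
def UpUnit {X : Type*} [Preorder X] (x : X) : UpperSet X :=
  UpperSet.Ici x

/-- The unit of the downset monad: `x ↦ ↓{x}`. -/
def DnUnit {X : Type*} [Preorder X] (x : X) : LowerSet X :=
  LowerSet.Iic x

/-- The multiplication of the upset monad: union. -/
def UpMul {X : Type*} [Preorder X] (S : UpperSet (UpperSet X)) : UpperSet X :=
  ⟨{x : X | ∃ s ∈ S, x ∈ s}, by
    rintro a b hab ⟨s, hs, has⟩
    exact ⟨s, hs, s.upper hab has⟩⟩

/-- The multiplication of the downset monad: union. -/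
def DnMul {X : Type*} [Preorder X] (S : LowerSet (LowerSet X)) : LowerSet X :=
  ⟨{x : X | ∃ s ∈ S, x ∈ s}, by
    rintro a b hba ⟨s, hs, has⟩
    exact ⟨s, hs, s.lower hba has⟩⟩

/-- The distributive law `λ_X : Dn (Up X) → Up (Dn X)`,
`S ↦ {T ∈ Dn X | ∀ s ∈ S, s ∩ T ≠ ∅}`. -/
def distLaw {X : Type*} [Preorder X] (S : LowerSet (UpperSet X)) : UpperSet (LowerSet X) :=
  ⟨{T : LowerSet X | ∀ s ∈ S, ((s : Set X) ∩ (T : Set X)).Nonempty}, by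
    intro T T' hTT' h s hs
    exact (h s hs).imp fun x hx => ⟨hx.1, hTT' hx.2⟩⟩

/-- Naturality of the distributive law `λ : Dn ∘ Up ⟹ Up ∘ Dn`:
`Up(Dn f)(λ_X S) = λ_Y (Dn(Up f) S)` for monotone `f`. -/
theorem distLaw_natural {X Y : Type*} [PartialOrder X] [PartialOrder Y]
    (f : X → Y) (hf : Monotone f) (S : LowerSet (UpperSet X)) :
    UpMap (DnMap f) (distLaw S) = distLaw (DnMap (UpMap f) S) := by
  ext U
  constructor
  · rintro ⟨_, ⟨T, hT, rfl⟩, hle⟩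
    intro s hs
    obtain ⟨_, ⟨s₀, hs₀, rfl⟩, hle'⟩ := hs
    obtain ⟨x, hxs, hxT⟩ := hT s₀ hs₀
    refine ⟨f x, ?_, ?_⟩
    · exact hle' (subset_upperClosure ⟨x, hxs, rfl⟩)
    · exact hle (subset_lowerClosure ⟨x, hxT, rfl⟩)
  · intro h
    refine ⟨DnMap f ⟨f ⁻¹' (U : Set Y), fun a b hba ha => U.lower (hf hba) ha⟩,
      ⟨_, ?_, rfl⟩, ?_⟩
    · intro s hs
      obtain ⟨y, hy1, hy2⟩ := h (UpMap f s) (subset_lowerClosure ⟨s, hs, rfl⟩)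
      obtain ⟨_, ⟨x, hx, rfl⟩, hxy⟩ := hy1
      exact ⟨x, hx, U.lower hxy hy2⟩
    · intro y hy
      obtain ⟨_, ⟨x, hx, rfl⟩, hxy⟩ := hy
      exact U.lower hxy hx
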